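/- The map Φ: Q × Q → SO(4) sending a pair of unit quaternions (l, r) to the linear transformation q ↦ l q r⁻¹ of ℝ⁴ ≅ ℍ is a surjective group homomorphism whose kernel is {(1,1), (-1,-1)}. -/

import Mathlib

open Quaternion

namespace Stmt16Aux

/-! ### Generic determinant computation -/

set_option maxHeartbeats 1000000 in
theorem det4 (a b c d e f g h i j k l m n o p : ℝ) :
    Matrix.det !![a,b,c,d; e,f,g,h; i,j,k,l; m,n,o,p] =
      a*f*k*p - a*f*l*o - a*g*j*p + a*g*l*n + a*h*j*o - a*h*k*n
      - b*e*k*p + b*e*l*o + b*g*i*p - b*g*l*m - b*h*i*o + b*h*k*m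
      + c*e*j*p - c*e*l*n - c*f*i*p + c*f*l*m + c*h*i*n - c*h*j*m
      - d*e*j*o + d*e*k*n + d*f*i*o - d*f*k*m - d*g*i*n + d*g*j*m := by
  rw [Matrix.det_succ_row_zero]
  simp [Fin.sum_univ_succ, Matrix.det_fin_three, Matrix.submatrix_apply, Fin.succAbove,
    show (Fin.castSucc 2 : Fin 4) = 2 from rfl]
  ring

/-- A quaternion literal typed as `ℍ`. -/
def qmk (a b c d : ℝ) : ℍ := ⟨a, b, c, d⟩

@[simp] theorem qmk_re (a b c d : ℝ) : (qmk a b c d).re = a := rfl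
@[simp] theorem qmk_imI (a b c d : ℝ) : (qmk a b c d).imI = b := rfl
@[simp] theorem qmk_imJ (a b c d : ℝ) : (qmk a b c d).imJ = c := rfl
@[simp] theorem qmk_imK (a b c d : ℝ) : (qmk a b c d).imK = d := rfl

noncomputable def qb : Module.Basis (Fin 4) ℝ ℍ :=
  Module.Basis.ofEquivFun (QuaternionAlgebra.linearEquivTuple (-1:ℝ) 0 (-1))

theorem qb_repr (x : ℍ) (i : Fin 4) : qb.repr x i = ![x.re, x.imI, x.imJ, x.imK] i := by
  simp [qb, QuaternionAlgebra.linearEquivTuple, QuaternionAlgebra.equivTuple]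
  rfl

theorem qb_apply (i : Fin 4) : qb i = ![1, qmk 0 1 0 0, qmk 0 0 1 0, qmk 0 0 0 1] i := by
  apply qb.repr.injective
  ext j
  rw [Module.Basis.repr_self, qb_repr]
  fin_cases i <;> fin_cases j <;> simp

theorem det_mulLeft (l : ℍ) : LinearMap.det (LinearMap.mulLeft ℝ l) = (normSq l)^2 := by
  rw [← LinearMap.det_toMatrix qb]
  have h : LinearMap.toMatrix qb qb (LinearMap.mulLeft ℝ l) =
    !![l.re, -l.imI, -l.imJ, -l.imK;
       l.imI, l.re, -l.imK, l.imJ;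
       l.imJ, l.imK, l.re, -l.imI;
       l.imK, -l.imJ, l.imI, l.re] := by
    ext i j
    rw [LinearMap.toMatrix_apply, qb_repr]
    fin_cases i <;> fin_cases j <;> simp [qb_apply, Quaternion.ext_iff]
  rw [h, det4, normSq_def']
  ring

theorem det_mulRight (r : ℍ) : LinearMap.det (LinearMap.mulRight ℝ r) = (normSq r)^2 := by
  rw [← LinearMap.det_toMatrix qb]
  have h : LinearMap.toMatrix qb qb (LinearMap.mulRight ℝ r) =
    !![r.re, -r.imI, -r.imJ, -r.imK;
       r.imI, r.re, r.imK, -r.imJ;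
       r.imJ, -r.imK, r.re, r.imI;
       r.imK, r.imJ, -r.imI, r.re] := by
    ext i j
    rw [LinearMap.toMatrix_apply, qb_repr]
    fin_cases i <;> fin_cases j <;> simp [qb_apply, Quaternion.ext_iff]
  rw [h, det4, normSq_def']
  ring

/-- `star` as an `ℝ`-linear map on the quaternions. -/
def starLM : ℍ →ₗ[ℝ] ℍ where
  toFun := star
  map_add' := star_add
  map_smul' := fun t x => by simp [Quaternion.star_smul]

theorem det_starLM : LinearMap.det starLM = -1 := by
  rw [← LinearMap.det_toMatrix qb]
  have h : LinearMap.toMatrix qb qb starLM =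
    !![1, 0, 0, 0; 0, -1, 0, 0; 0, 0, -1, 0; 0, 0, 0, -1] := by
    ext i j
    rw [LinearMap.toMatrix_apply, qb_repr]
    fin_cases i <;> fin_cases j <;> simp [qb_apply, starLM, Quaternion.ext_iff, Matrix.vecHead, Matrix.vecTail]
  rw [h, det4]
  norm_num

/-! ### Norm helpers -/

theorem normSq_one_of_norm_one {a : ℍ} (h : ‖a‖ = 1) : normSq a = 1 := by
  rw [normSq_eq_norm_mul_self, h, one_mul]

theorem norm_eq_of_normSq_eq {x y : ℍ} (h : normSq x = normSq y) : ‖x‖ = ‖y‖ := by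
  rw [normSq_eq_norm_mul_self, normSq_eq_norm_mul_self] at h
  calc ‖x‖ = Real.sqrt (‖x‖ * ‖x‖) := (Real.sqrt_mul_self (norm_nonneg x)).symm
    _ = Real.sqrt (‖y‖ * ‖y‖) := by rw [h]
    _ = ‖y‖ := Real.sqrt_mul_self (norm_nonneg y)

theorem norm_one_of_normSq_one {a : ℍ} (h : normSq a = 1) : ‖a‖ = 1 := by
  have : normSq a = normSq 1 := by simpa using h
  simpa using norm_eq_of_normSq_eq this

theorem inv_eq_star {r : ℍ} (h : ‖r‖ = 1) : r⁻¹ = star r := by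
  have : r * star r = 1 := by
    rw [self_mul_star, normSq_one_of_norm_one h]; simp
  exact inv_eq_of_mul_eq_one_right this

theorem re_mul_comm (a b : ℍ) : (a * b).re = (b * a).re := by
  simp [Quaternion.re_mul]; ring

/-! ### Reflections -/

theorem refl_identity (a b : ℍ) :
    -((a - b) * star a * (a - b)) =
      (normSq b - normSq a) • a + (normSq (a - b) + normSq a - normSq b) • b := by
  ext <;>
    simp [Quaternion.re_mul, Quaternion.imI_mul, Quaternion.imJ_mul, Quaternion.imK_mul,
      normSq_def'] <;> ring

theorem refl_fix (u q : ℍ) (h : (q * star u).re = 0) :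
    -(u * star q * u) = normSq u • q := by
  have h1 : u * star q = -(q * star u) := by
    have h2 : q * star u + u * star q = ((2 * (q * star u).re : ℝ) : ℍ) := by
      rw [show u * star q = star (q * star u) by simp [star_mul]]
      exact self_add_star' _
    rw [h] at h2
    simp at h2
    exact eq_neg_of_add_eq_zero_right h2
  rw [h1, neg_mul, neg_neg, mul_assoc, star_mul_self, mul_coe_eq_smul]

/-! ### The classes T and T' -/

/-- Maps of the form `q ↦ l * q * star r` with `l, r` unit quaternions. -/
def IsT (g : ℍ → ℍ) : Prop :=
  ∃ l r : ℍ, ‖l‖ = 1 ∧ ‖r‖ = 1 ∧ ∀ q, g q = l * q * star r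

/-- Maps of the form `q ↦ l * star q * star r` with `l, r` unit quaternions. -/
def IsT' (g : ℍ → ℍ) : Prop :=
  ∃ l r : ℍ, ‖l‖ = 1 ∧ ‖r‖ = 1 ∧ ∀ q, g q = l * star q * star r

theorem comp_mem {g h : ℍ → ℍ} (hg : IsT g ∨ IsT' g) (hh : IsT h ∨ IsT' h) :
    IsT (g ∘ h) ∨ IsT' (g ∘ h) := by
  rcases hg with ⟨l, r, hl, hr, hgq⟩ | ⟨l, r, hl, hr, hgq⟩ <;>
    rcases hh with ⟨l', r', hl', hr', hhq⟩ | ⟨l', r', hl', hr', hhq⟩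
  · exact Or.inl ⟨l * l', r * r', by simp [hl, hl'], by simp [hr, hr'],
      fun q => by simp [Function.comp, hgq, hhq, star_mul, mul_assoc]⟩
  · exact Or.inr ⟨l * l', r * r', by simp [hl, hl'], by simp [hr, hr'],
      fun q => by simp [Function.comp, hgq, hhq, star_mul, mul_assoc]⟩
  · exact Or.inr ⟨l * r', r * l', by simp [hl, hr'], by simp [hr, hl'],
      fun q => by simp [Function.comp, hgq, hhq, star_mul, mul_assoc]⟩
  · exact Or.inl ⟨l * r', r * l', by simp [hl, hr'], by simp [hr, hl'],
      fun q => by simp [Function.comp, hgq, hhq, star_mul, mul_assoc]⟩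

theorem inner_pres {g : ℍ → ℍ} (hg : IsT g ∨ IsT' g) (p q : ℍ) :
    (g p * star (g q)).re = (p * star q).re := by
  rcases hg with ⟨l, r, hl, hr, hgq⟩ | ⟨l, r, hl, hr, hgq⟩
  · have : g p * star (g q) = l * (p * star q) * star l := by
      rw [hgq, hgq]
      simp only [star_mul, star_star]
      calc l * p * star r * (r * (star q * star l))
          = l * (p * (star r * r) * star q) * star l := by noncomm_ring
        _ = l * (p * star q) * star l := by
            rw [star_mul_self, normSq_one_of_norm_one hr]; simp
    rw [this, re_mul_comm, ← mul_assoc, re_mul_comm ((star l) * l)]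
    rw [star_mul_self, normSq_one_of_norm_one hl]
    simp
  · have : g p * star (g q) = l * (star p * q) * star l := by
      rw [hgq, hgq]
      simp only [star_mul, star_star]
      calc l * star p * star r * (r * (q * star l))
          = l * (star p * (star r * r) * q) * star l := by noncomm_ring
        _ = l * (star p * q) * star l := by
            rw [star_mul_self, normSq_one_of_norm_one hr]; simp
    rw [this, re_mul_comm, ← mul_assoc, re_mul_comm ((star l) * l)]
    rw [star_mul_self, normSq_one_of_norm_one hl]
    have h3 : (star p * q).re = (p * star q).re := by
      rw [show (star p * q).re = (star (star p * q)).re from (Quaternion.re_star _).symm,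
        star_mul, star_star, re_mul_comm]
    simp [h3]

theorem map_add_of_mem {g : ℍ → ℍ} (hg : IsT g ∨ IsT' g) (x y : ℍ) :
    g (x + y) = g x + g y := by
  rcases hg with ⟨l, r, hl, hr, hgq⟩ | ⟨l, r, hl, hr, hgq⟩ <;>
    simp [hgq, mul_add, add_mul]

theorem map_smul_of_mem {g : ℍ → ℍ} (hg : IsT g ∨ IsT' g) (t : ℝ) (x : ℍ) :
    g (t • x) = t • g x := by
  rcases hg with ⟨l, r, hl, hr, hgq⟩ | ⟨l, r, hl, hr, hgq⟩ <;>
    simp [hgq, Quaternion.star_smul, mul_smul_comm, smul_mul_assoc]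

theorem step (a b : ℍ) (hab : ‖a‖ = ‖b‖) :
    ∃ g : ℍ → ℍ, (IsT g ∨ IsT' g) ∧ g a = b ∧ ∀ q, (q * star (a - b)).re = 0 → g q = q := by
  by_cases hab' : a = b
  · exact ⟨id, Or.inl ⟨1, 1, norm_one, norm_one, fun q => by simp⟩, hab' ▸ rfl, fun _ _ => rfl⟩
  · set c := a - b with hc
    have hc0 : c ≠ 0 := sub_ne_zero.2 hab'
    have hnc : ‖c‖ ≠ 0 := norm_ne_zero_iff.2 hc0
    have hN : normSq c ≠ 0 := by
      rw [normSq_eq_norm_mul_self]; positivity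
    refine ⟨fun q => (normSq c)⁻¹ • (-(c * star q * c)), Or.inr ?_, ?_, ?_⟩
    · refine ⟨‖c‖⁻¹ • (-c), ‖c‖⁻¹ • star c, ?_, ?_, fun q => ?_⟩
      · rw [norm_smul]; simp [hnc]
      · rw [norm_smul]; simp [hnc]
      · rw [Quaternion.star_smul, star_star]
        rw [smul_mul_assoc, smul_mul_assoc, mul_smul_comm, smul_smul]
        rw [normSq_eq_norm_mul_self, mul_inv]
        simp [neg_mul]
    · have h1 : normSq a = normSq b := by
        rw [normSq_eq_norm_mul_self, normSq_eq_norm_mul_self, hab]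
      have h2 : -(c * star a * c) = normSq c • b := by
        rw [hc, refl_identity a b, h1]
        simp
      show (normSq c)⁻¹ • (-(c * star a * c)) = b
      rw [h2, smul_smul, inv_mul_cancel₀ hN, one_smul]
    · intro q hq
      show (normSq c)⁻¹ • (-(c * star q * c)) = q
      rw [refl_fix c q hq, smul_smul, inv_mul_cancel₀ hN, one_smul]

theorem inv_mem {g : ℍ → ℍ} (f : ℍ → ℍ) (hg : IsT g ∨ IsT' g) (hgf : ∀ q, g (f q) = q) :
    IsT f ∨ IsT' f := by
  rcases hg with ⟨l, r, hl, hr, hgq⟩ | ⟨l, r, hl, hr, hgq⟩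
  · refine Or.inl ⟨star l, star r, by simp [hl], by simp [hr], fun q => ?_⟩
    have h := hgf q
    rw [hgq] at h
    have h5 : star l * (l * f q * star r) * star (star r) = star l * q * star (star r) := by
      rw [h]
    rw [star_star]
    rw [star_star, show star l * (l * f q * star r) * r = f q from ?_] at h5
    exact h5
    calc star l * (l * f q * star r) * r = (star l * l) * f q * (star r * r) := by noncomm_ring
      _ = f q := by rw [star_mul_self, star_mul_self, normSq_one_of_norm_one hl,
            normSq_one_of_norm_one hr]; simp
  · refine Or.inr ⟨star r, star l, by simp [hr], by simp [hl], fun q => ?_⟩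
    have h := hgf q
    rw [hgq] at h
    have h2 : star l * (l * star (f q) * star r) * r = star l * q * r := by rw [h]
    have h3 : star (f q) = star l * q * r := by
      rw [← h2]
      exact (calc star l * (l * star (f q) * star r) * r
          = (star l * l) * star (f q) * (star r * r) := by noncomm_ring
        _ = star (f q) := by rw [star_mul_self, star_mul_self, normSq_one_of_norm_one hl,
              normSq_one_of_norm_one hr]; simp).symm
    have h4 := congrArg star h3
    rw [star_star] at h4
    rw [h4]
    simp [star_mul, star_star, mul_assoc]

/-! ### Basis vectors -/

def eI : ℍ := qmk 0 1 0 0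
def eJ : ℍ := qmk 0 0 1 0
def eK : ℍ := qmk 0 0 0 1

theorem dot1 (x : ℍ) : (x * star (1:ℍ)).re = x.re := by simp
theorem dotI (x : ℍ) : (x * star eI).re = x.imI := by
  simp [eI, Quaternion.re_mul]
theorem dotJ (x : ℍ) : (x * star eJ).re = x.imJ := by
  simp [eJ, Quaternion.re_mul]

theorem normSq_eI : normSq eI = 1 := by simp [eI, normSq_def']
theorem normSq_eJ : normSq eJ = 1 := by simp [eJ, normSq_def']
theorem normSq_eK : normSq eK = 1 := by simp [eK, normSq_def']

theorem decomp (q : ℍ) : q.re • (1:ℍ) + q.imI • eI + q.imJ • eJ + q.imK • eK = q := by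
  ext <;> simp [eI, eJ, eK]


/-! ### Every linear isometry equivalence is in T or T' -/

theorem exists_form (f : ℍ ≃ₗᵢ[ℝ] ℍ) : IsT ⇑f ∨ IsT' ⇑f := by
  classical
  have hf_inner : ∀ p q : ℍ, ((f p) * star (f q)).re = (p * star q).re := by
    intro p q
    exact f.inner_map_map p q
  -- Step 1: fix 1
  obtain ⟨g₁, hg₁m, hg₁a, hg₁fix⟩ := step (f 1) 1 (by rw [f.norm_map])
  set F₁ : ℍ → ℍ := g₁ ∘ ⇑f with hF₁def
  have hF₁inner : ∀ p q : ℍ, (F₁ p * star (F₁ q)).re = (p * star q).re := by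
    intro p q
    show ((g₁ (f p)) * star (g₁ (f q))).re = _
    rw [inner_pres hg₁m, hf_inner]
  have hF₁1 : F₁ 1 = 1 := hg₁a
  -- Step 2: fix i
  have hn2 : ‖F₁ eI‖ = ‖eI‖ := by
    apply norm_eq_of_normSq_eq
    rw [normSq_def, normSq_def, hF₁inner]
  obtain ⟨g₂, hg₂m, hg₂a, hg₂fix⟩ := step (F₁ eI) eI hn2
  have hreF₁i : (F₁ eI).re = 0 := by
    have h := hF₁inner eI 1
    rw [hF₁1, dot1, dot1] at h
    rw [h]; simp [eI]
  set F₂ : ℍ → ℍ := g₂ ∘ F₁ with hF₂def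
  have hF₂inner : ∀ p q : ℍ, (F₂ p * star (F₂ q)).re = (p * star q).re := by
    intro p q
    show ((g₂ (F₁ p)) * star (g₂ (F₁ q))).re = _
    rw [inner_pres hg₂m, hF₁inner]
  have hF₂1 : F₂ 1 = 1 := by
    show g₂ (F₁ 1) = 1
    rw [hF₁1]
    apply hg₂fix
    rw [one_mul, star_sub, Quaternion.re_sub, Quaternion.re_star, Quaternion.re_star, hreF₁i]
    simp [eI]
  have hF₂i : F₂ eI = eI := hg₂a
  -- Step 3: fix j
  have hn3 : ‖F₂ eJ‖ = ‖eJ‖ := by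
    apply norm_eq_of_normSq_eq
    rw [normSq_def, normSq_def, hF₂inner]
  obtain ⟨g₃, hg₃m, hg₃a, hg₃fix⟩ := step (F₂ eJ) eJ hn3
  have hreF₂j : (F₂ eJ).re = 0 := by
    have h := hF₂inner eJ 1
    rw [hF₂1, dot1, dot1] at h
    rw [h]; simp [eJ]
  have hiF₂j : (eI * star (F₂ eJ)).re = 0 := by
    have h := hF₂inner eI eJ
    rw [hF₂i] at h
    rw [h]
    simp [eI, eJ, Quaternion.re_mul]
  set F₃ : ℍ → ℍ := g₃ ∘ F₂ with hF₃def
  have hF₃inner : ∀ p q : ℍ, (F₃ p * star (F₃ q)).re = (p * star q).re := by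
    intro p q
    show ((g₃ (F₂ p)) * star (g₃ (F₂ q))).re = _
    rw [inner_pres hg₃m, hF₂inner]
  have hF₃1 : F₃ 1 = 1 := by
    show g₃ (F₂ 1) = 1
    rw [hF₂1]
    apply hg₃fix
    rw [one_mul, star_sub, Quaternion.re_sub, Quaternion.re_star, Quaternion.re_star, hreF₂j]
    simp [eJ]
  have hF₃i : F₃ eI = eI := by
    show g₃ (F₂ eI) = eI
    rw [hF₂i]
    apply hg₃fix
    rw [star_sub, mul_sub, Quaternion.re_sub, hiF₂j]
    simp [eI, eJ, Quaternion.re_mul]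
  have hF₃j : F₃ eJ = eJ := hg₃a
  -- Step 4: F₃ eK = ± eK
  have hx_re : (F₃ eK).re = 0 := by
    have h := hF₃inner eK 1
    rw [hF₃1, dot1, dot1] at h
    rw [h]; simp [eK]
  have hx_imI : (F₃ eK).imI = 0 := by
    have h := hF₃inner eK eI
    rw [hF₃i, dotI, dotI] at h
    rw [h]; simp [eK]
  have hx_imJ : (F₃ eK).imJ = 0 := by
    have h := hF₃inner eK eJ
    rw [hF₃j, dotJ, dotJ] at h
    rw [h]; simp [eK]
  have hx_normSq : normSq (F₃ eK) = 1 := by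
    rw [normSq_def, hF₃inner, ← normSq_def, normSq_eK]
  have hx_cases : F₃ eK = eK ∨ F₃ eK = -eK := by
    rw [normSq_def'] at hx_normSq
    rw [hx_re, hx_imI, hx_imJ] at hx_normSq
    have h1 : ((F₃ eK).imK - 1) * ((F₃ eK).imK + 1) = 0 := by nlinarith
    rcases mul_eq_zero.1 h1 with h2 | h2
    · left
      have h4 : (F₃ eK).imK = 1 := by linarith
      ext
      · rw [hx_re]; rfl
      · rw [hx_imI]; rfl
      · rw [hx_imJ]; rfl
      · rw [h4]; rfl
    · right
      have h4 : (F₃ eK).imK = -1 := by linarith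
      ext
      · rw [hx_re]; simp [eK]
      · rw [hx_imI]; simp [eK]
      · rw [hx_imJ]; simp [eK]
      · rw [h4]; simp [eK]
  -- assemble
  have key : ∀ H : ℍ → ℍ, (IsT H ∨ IsT' H) → (∀ q, H (f q) = F₃ q) →
      F₃ 1 = 1 → F₃ eI = eI → F₃ eJ = eJ → F₃ eK = eK → (IsT ⇑f ∨ IsT' ⇑f) := by
    intro H hHm hHF h1 hi hj hk
    apply inv_mem ⇑f hHm
    intro q
    rw [hHF q]
    have hadd : ∀ x y, F₃ (x + y) = F₃ x + F₃ y := by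
      intro x y
      have hxy : ∀ z, F₃ z = H (f z) := fun z => (hHF z).symm
      rw [hxy, hxy, hxy, map_add, map_add_of_mem hHm]
    have hsmul : ∀ (t : ℝ) x, F₃ (t • x) = t • F₃ x := by
      intro t x
      have hxy : ∀ z, F₃ z = H (f z) := fun z => (hHF z).symm
      rw [hxy, hxy, map_smul, map_smul_of_mem hHm]
    conv_lhs => rw [← decomp q]
    rw [hadd, hadd, hadd, hsmul, hsmul, hsmul, hsmul, h1, hi, hj, hk]
    exact decomp q
  rcases hx_cases with hk | hk
  · exact key (g₃ ∘ (g₂ ∘ g₁)) (comp_mem hg₃m (comp_mem hg₂m hg₁m)) (fun q => rfl)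
      hF₃1 hF₃i hF₃j hk
  · -- compose with the reflection q ↦ (-eK) * star q * eK
    set g₄ : ℍ → ℍ := fun q => (-eK) * star q * eK with hg₄def
    have hg₄m : IsT g₄ ∨ IsT' g₄ := by
      refine Or.inr ⟨-eK, -eK, ?_, ?_, fun q => ?_⟩
      · rw [norm_neg]; exact norm_one_of_normSq_one normSq_eK
      · rw [norm_neg]; exact norm_one_of_normSq_one normSq_eK
      · have : star (-eK) = eK := by ext <;> simp [eK]
        rw [hg₄def, this]
    set F₄ : ℍ → ℍ := g₄ ∘ F₃ with hF₄def
    have hF₄1 : F₄ 1 = 1 := by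
      show g₄ (F₃ 1) = 1
      rw [hF₃1, hg₄def]
      ext <;> simp [eK, Quaternion.re_mul]
    have hF₄i : F₄ eI = eI := by
      show g₄ (F₃ eI) = eI
      rw [hF₃i, hg₄def]
      ext <;> simp [eK, eI, Quaternion.re_mul, Quaternion.imI_mul, Quaternion.imJ_mul,
        Quaternion.imK_mul]
    have hF₄j : F₄ eJ = eJ := by
      show g₄ (F₃ eJ) = eJ
      rw [hF₃j, hg₄def]
      ext <;> simp [eK, eJ, Quaternion.re_mul, Quaternion.imI_mul, Quaternion.imJ_mul,
        Quaternion.imK_mul]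
    have hF₄k : F₄ eK = eK := by
      show g₄ (F₃ eK) = eK
      rw [hk, hg₄def]
      ext <;> simp [eK, Quaternion.re_mul, Quaternion.imI_mul, Quaternion.imJ_mul,
        Quaternion.imK_mul]
    -- apply key with F₄ in place of F₃: rerun key argument
    have key4 : ∀ H : ℍ → ℍ, (IsT H ∨ IsT' H) → (∀ q, H (f q) = F₄ q) →
        (IsT ⇑f ∨ IsT' ⇑f) := by
      intro H hHm hHF
      apply inv_mem ⇑f hHm
      intro q
      rw [hHF q]
      have hxy : ∀ z, F₄ z = H (f z) := fun z => (hHF z).symm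
      have hadd : ∀ x y, F₄ (x + y) = F₄ x + F₄ y := by
        intro x y
        rw [hxy, hxy, hxy, map_add, map_add_of_mem hHm]
      have hsmul : ∀ (t : ℝ) x, F₄ (t • x) = t • F₄ x := by
        intro t x
        rw [hxy, hxy, map_smul, map_smul_of_mem hHm]
      conv_lhs => rw [← decomp q]
      rw [hadd, hadd, hadd, hsmul, hsmul, hsmul, hsmul, hF₄1, hF₄i, hF₄j, hF₄k]
      exact decomp q
    exact key4 (g₄ ∘ (g₃ ∘ (g₂ ∘ g₁)))
      (comp_mem hg₄m (comp_mem hg₃m (comp_mem hg₂m hg₁m))) (fun q => rfl)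

end Stmt16Aux


open Stmt16Aux

/-- The map Φ sending a pair of unit quaternions (l, r) to q ↦ l q r⁻¹ is a
surjective group homomorphism onto SO(4) (the orientation-preserving linear
isometries of ℝ⁴ ≅ ℍ) with kernel {(1,1), (-1,-1)}. -/
theorem stmt16 :
    -- each Φ(l,r) is an isometry of ℝ⁴ ≅ ℍ
    (∀ l r : Quaternion ℝ, ‖l‖ = 1 → ‖r‖ = 1 →
      ∀ q : Quaternion ℝ, ‖l * q * r⁻¹‖ = ‖q‖) ∧
    -- Φ is a homomorphism
    (∀ l l' r r' q : Quaternion ℝ, ‖l‖ = 1 → ‖l'‖ = 1 → ‖r‖ = 1 → ‖r'‖ = 1 →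
      l * (l' * q * r'⁻¹) * r⁻¹ = (l * l') * q * (r * r')⁻¹) ∧
    -- Φ(l,r) has determinant 1, and Φ is onto SO(4)
    (∀ l r : Quaternion ℝ, ‖l‖ = 1 → ‖r‖ = 1 →
      LinearMap.det ((LinearMap.mulRight ℝ r⁻¹).comp (LinearMap.mulLeft ℝ l)) = 1) ∧
    (∀ f : Quaternion ℝ ≃ₗᵢ[ℝ] Quaternion ℝ,
      LinearMap.det (f.toLinearEquiv : Quaternion ℝ →ₗ[ℝ] Quaternion ℝ) = 1 →
      ∃ l r : Quaternion ℝ, ‖l‖ = 1 ∧ ‖r‖ = 1 ∧ ∀ q, f q = l * q * r⁻¹) ∧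
    -- kernel is {(1,1), (-1,-1)}
    (∀ l r : Quaternion ℝ, ‖l‖ = 1 → ‖r‖ = 1 →
      ((∀ q : Quaternion ℝ, l * q * r⁻¹ = q) ↔ (l = 1 ∧ r = 1) ∨ (l = -1 ∧ r = -1))) := by
  refine ⟨?_, ?_, ?_, ?_, ?_⟩
  · intro l r hl hr q
    rw [norm_mul, norm_mul, norm_inv, hl, hr]
    simp
  · intro l l' r r' q _ _ _ _
    rw [mul_inv_rev]
    noncomm_ring
  · intro l r hl hr
    rw [LinearMap.det_comp, det_mulRight, det_mulLeft,
      normSq_one_of_norm_one hl, normSq_one_of_norm_one (by rw [norm_inv, hr]; norm_num)]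
    norm_num
  · intro f hdet
    rcases exists_form f with ⟨l, r, hl, hr, hf⟩ | ⟨l, r, hl, hr, hf⟩
    · exact ⟨l, r, hl, hr, fun q => by rw [inv_eq_star hr]; exact hf q⟩
    · exfalso
      have hEq : (f.toLinearEquiv : Quaternion ℝ →ₗ[ℝ] Quaternion ℝ) =
          (LinearMap.mulRight ℝ (star r)).comp ((LinearMap.mulLeft ℝ l).comp starLM) := by
        apply LinearMap.ext
        intro q
        show f q = _
        rw [hf q]
        simp [starLM, mul_assoc]
      rw [hEq, LinearMap.det_comp, LinearMap.det_comp, det_mulRight, det_mulLeft, det_starLM,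
        normSq_star, normSq_one_of_norm_one hl, normSq_one_of_norm_one hr] at hdet
      norm_num at hdet
  · intro l r hl hr
    constructor
    · intro h
      have hr0 : r ≠ 0 := by
        intro h0
        rw [h0] at hr
        simp at hr
      have hlr : l = r := by
        have h1 := h 1
        rw [mul_one] at h1
        exact (mul_inv_eq_one₀ hr0).1 h1
      subst hlr
      have hcomm : ∀ q, l * q = q * l := by
        intro q
        have h2 : l * q * l⁻¹ * l = q * l := by rw [h q]
        rwa [mul_assoc, inv_mul_cancel₀ hr0, mul_one] at h2
      have h3 := hcomm eI
      have h4 := hcomm eJ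
      rw [Quaternion.ext_iff] at h3 h4
      simp [eI, eJ, Quaternion.re_mul, Quaternion.imI_mul, Quaternion.imJ_mul,
        Quaternion.imK_mul] at h3 h4
      have himI : l.imI = 0 := by linarith [h4.2]
      have himJ : l.imJ = 0 := by linarith [h3.2]
      have himK : l.imK = 0 := by linarith [h3.1]
      have hns := normSq_one_of_norm_one hr
      rw [normSq_def', himI, himJ, himK] at hns
      have h5 : (l.re - 1) * (l.re + 1) = 0 := by nlinarith
      rcases mul_eq_zero.1 h5 with h6 | h6
      · left
        have h7 : l.re = 1 := by linarith
        constructor <;> (ext <;> simp [himI, himJ, himK, h7])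
      · right
        have h7 : l.re = -1 := by linarith
        constructor <;> (ext <;> simp [himI, himJ, himK, h7])
    · rintro (⟨h1, h2⟩ | ⟨h1, h2⟩) q <;> subst h1 <;> subst h2 <;> simp [inv_neg]
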